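/- Let I be a nonempty open interval with inf I = 0 and let E be a normalizable semideviation on I such that E* is concave on I × I and lim_{t→0⁺} E*(xt,t) = 0 for every x > 0. Then for every x > 0 the limit h_E(x) := lim_{t→0⁺} E*(xt,t)/t exists and is a real number, sign(h_E(x)) = sign(x−1), and the function h_E : (0,∞) → ℝ is concave, nondecreasing on (0,∞), and strictly increasing on (0,1). -/

import Mathlib

open Set Filter Topology

/-- The weighted sum `e(y) = λ₁E(x₁,y)+⋯+λₙE(xₙ,y)`. -/
noncomputable def eFun (E : ℝ → ℝ → ℝ) {n : ℕ} (x lam : Fin n → ℝ) (y : ℝ) : ℝ :=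
  ∑ i, lam i * E (x i) y

/-- Lower semideviation mean `LLD_E(x,λ) = inf {y ∈ I : e(y) ≤ 0}`. -/
noncomputable def LLD (I : Set ℝ) (E : ℝ → ℝ → ℝ) {n : ℕ} (x lam : Fin n → ℝ) : ℝ :=
  sInf {y : ℝ | y ∈ I ∧ eFun E x lam y ≤ 0}

/-- Upper semideviation mean `UUD_E(x,λ) = sup {y ∈ I : e(y) ≥ 0}`. -/
noncomputable def UUD (I : Set ℝ) (E : ℝ → ℝ → ℝ) {n : ℕ} (x lam : Fin n → ℝ) : ℝ :=
  sSup {y : ℝ | y ∈ I ∧ 0 ≤ eFun E x lam y}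

/-- `LD_E(x,λ) = inf {y ∈ I : e(y) < 0}`. -/
noncomputable def LD (I : Set ℝ) (E : ℝ → ℝ → ℝ) {n : ℕ} (x lam : Fin n → ℝ) : ℝ :=
  sInf {y : ℝ | y ∈ I ∧ eFun E x lam y < 0}

/-- `UD_E(x,λ) = sup {y ∈ I : e(y) > 0}`. -/
noncomputable def UD (I : Set ℝ) (E : ℝ → ℝ → ℝ) {n : ℕ} (x lam : Fin n → ℝ) : ℝ :=
  sSup {y : ℝ | y ∈ I ∧ 0 < eFun E x lam y}

/-- A weight vector: nonnegative entries with positive sum. -/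
def IsWeight {n : ℕ} (lam : Fin n → ℝ) : Prop :=
  (∀ i, 0 ≤ lam i) ∧ 0 < ∑ i, lam i

/-- `E` is a semideviation on `I`: for distinct `x, y ∈ I` the sign of `E x y`
coincides with the sign of `x - y`. -/
def IsSemideviation (I : Set ℝ) (E : ℝ → ℝ → ℝ) : Prop :=
  ∀ x ∈ I, ∀ y ∈ I, x ≠ y → Real.sign (E x y) = Real.sign (x - y)

/-- `E` is a normalizable semideviation on `I`, with `d x = ∂₂E(x,x)`. -/
def IsNormalizable (I : Set ℝ) (E : ℝ → ℝ → ℝ) (d : ℝ → ℝ) : Prop :=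
  IsSemideviation I E ∧
  (∀ x ∈ I, ContinuousOn (fun y => E x y) I) ∧
  (∀ x ∈ I, HasDerivWithinAt (fun y => E x y) (d x) I x) ∧
  (∀ x ∈ I, d x < 0) ∧
  ContinuousOn d I

/-- The normalization `E*(x,y) = E(x,y)/(-∂₂E(y,y))`. -/
noncomputable def nrm (E : ℝ → ℝ → ℝ) (d : ℝ → ℝ) (x y : ℝ) : ℝ :=
  E x y / (-(d y))

set_option maxHeartbeats 1000000

/-- Theorem (first part): if `E*` is concave and `E*(xt,t) → 0` as `t → 0⁺` for all
`x > 0`, then `h_E(x) = lim_{t→0⁺} E*(xt,t)/t` exists in `ℝ`, has the sign of `x - 1`,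
and `h_E` is concave, nondecreasing on `(0,∞)` and strictly increasing on `(0,1)`. -/
theorem statement11 (I : Set ℝ) (hIoc : I.OrdConnected) (hIo : IsOpen I)
    (hne : I.Nonempty) (hglb : IsGLB I 0) (E : ℝ → ℝ → ℝ) (d : ℝ → ℝ)
    (hE : IsNormalizable I E d)
    (hconc : ConcaveOn ℝ (I ×ˢ I) (fun p : ℝ × ℝ => nrm E d p.1 p.2))
    (hlim0 : ∀ x : ℝ, 0 < x →
      Filter.Tendsto (fun t : ℝ => nrm E d (x * t) t)
        ((𝓝[>] (0:ℝ)) ⊓ Filter.principal {t : ℝ | x * t ∈ I ∧ t ∈ I}) (𝓝 0)) :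
    ∃ h : ℝ → ℝ,
      (∀ x : ℝ, 0 < x →
        Filter.Tendsto (fun t : ℝ => nrm E d (x * t) t / t)
          ((𝓝[>] (0:ℝ)) ⊓ Filter.principal {t : ℝ | x * t ∈ I ∧ t ∈ I}) (𝓝 (h x))) ∧
      (∀ x : ℝ, 0 < x → Real.sign (h x) = Real.sign (x - 1)) ∧
      ConcaveOn ℝ (Set.Ioi (0:ℝ)) h ∧
      MonotoneOn h (Set.Ioi (0:ℝ)) ∧
      StrictMonoOn h (Set.Ioo (0:ℝ) 1) := by
  obtain ⟨hsgn, hcont, hderiv, hdneg, hdcont⟩ := hE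
  -- every element of I is positive
  have hIpos : ∀ x ∈ I, 0 < x := by
    intro x hx
    rcases (hglb.1 hx).lt_or_eq with h | h
    · exact h
    · exfalso
      obtain ⟨δ, hδ, hsub⟩ := Metric.isOpen_iff.1 hIo x hx
      have hmem : x - δ/2 ∈ I := by
        apply hsub
        simp [Real.ball_eq_Ioo]
        constructor <;> linarith
      have := hglb.1 hmem
      linarith
  obtain ⟨c, hcI⟩ := hne
  have hc0 : 0 < c := hIpos c hcI
  have hIc : ∀ t : ℝ, 0 < t → t ≤ c → t ∈ I := by
    intro t ht htc
    obtain ⟨a, haI, -, hat⟩ := hglb.exists_between ht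
    exact hIoc.out haI hcI ⟨hat.le, htc⟩
  -- sign facts for E
  have hEpos : ∀ x ∈ I, ∀ y ∈ I, y < x → 0 < E x y := by
    intro x hx y hy hyx
    by_contra hcon
    push_neg at hcon
    have hs := hsgn x hx y hy (ne_of_gt hyx)
    rw [Real.sign_of_pos (by linarith : (0:ℝ) < x - y)] at hs
    rcases hcon.lt_or_eq with h' | h'
    · rw [Real.sign_of_neg h'] at hs; norm_num at hs
    · rw [h', Real.sign_zero] at hs; norm_num at hs
  have hEneg : ∀ x ∈ I, ∀ y ∈ I, x < y → E x y < 0 := by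
    intro x hx y hy hxy
    by_contra hcon
    push_neg at hcon
    have hs := hsgn x hx y hy (ne_of_lt hxy)
    rw [Real.sign_of_neg (by linarith : x - y < 0)] at hs
    rcases hcon.lt_or_eq with h' | h'
    · rw [Real.sign_of_pos h'] at hs; norm_num at hs
    · rw [← h', Real.sign_zero] at hs; norm_num at hs
  -- E x x = 0
  have hExx : ∀ x ∈ I, E x x = 0 := by
    intro x hx
    have hcx : ContinuousAt (fun y => E x y) x :=
      (hcont x hx).continuousAt (hIo.mem_nhds hx)
    obtain ⟨δ, hδ, hsub⟩ := Metric.isOpen_iff.1 hIo x hx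
    rw [Real.ball_eq_Ioo] at hsub
    have h1 : 0 ≤ E x x := by
      refine ge_of_tendsto (hcx.tendsto.mono_left nhdsWithin_le_nhds :
        Tendsto (fun y => E x y) (𝓝[<] x) (𝓝 (E x x))) ?_
      filter_upwards [Ioo_mem_nhdsLT_of_mem (⟨by linarith, le_refl x⟩ : x ∈ Ioc (x - δ) x)]
        with y hy
      exact (hEpos x hx y (hsub ⟨hy.1, by linarith [hy.2]⟩) hy.2).le
    have h2 : E x x ≤ 0 := by
      refine le_of_tendsto (hcx.tendsto.mono_left nhdsWithin_le_nhds :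
        Tendsto (fun y => E x y) (𝓝[>] x) (𝓝 (E x x))) ?_
      filter_upwards [Ioo_mem_nhdsGT_of_mem (⟨le_refl x, by linarith⟩ : x ∈ Ico x (x + δ))]
        with y hy
      exact (hEneg x hx y (hsub ⟨by linarith [hy.1], hy.2⟩) hy.1).le
    linarith
  -- sign facts for nrm
  have hFpos : ∀ x ∈ I, ∀ y ∈ I, y < x → 0 < nrm E d x y := by
    intro x hx y hy hyx
    exact div_pos (hEpos x hx y hy hyx) (by linarith [hdneg y hy])
  have hFneg : ∀ x ∈ I, ∀ y ∈ I, x < y → nrm E d x y < 0 := by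
    intro x hx y hy hxy
    exact div_neg_of_neg_of_pos (hEneg x hx y hy hxy) (by linarith [hdneg y hy])
  have hFzero : ∀ x ∈ I, nrm E d x x = 0 := by
    intro x hx; simp [nrm, hExx x hx]
  -- the threshold function τ
  set τ : ℝ → ℝ := fun x => min c (c / x) with hτdef
  have hτpos : ∀ x : ℝ, 0 < x → 0 < τ x := fun x hx => lt_min hc0 (div_pos hc0 hx)
  have hmem : ∀ x t : ℝ, 0 < x → t ∈ Ioo 0 (τ x) → t ∈ I ∧ x * t ∈ I := by
    intro x t hx ht
    obtain ⟨ht0, htτ⟩ := ht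
    constructor
    · exact hIc t ht0 (le_of_lt (lt_of_lt_of_le htτ (min_le_left _ _)))
    · refine hIc (x * t) (by positivity) ?_
      have : t < c / x := lt_of_lt_of_le htτ (min_le_right _ _)
      calc x * t ≤ x * (c / x) := by nlinarith
        _ = c := by field_simp
  -- the filter simplifies to 𝓝[>] 0
  have hfilter : ∀ x : ℝ, 0 < x →
      (𝓝[>] (0:ℝ)) ⊓ Filter.principal {t : ℝ | x * t ∈ I ∧ t ∈ I} = 𝓝[>] (0:ℝ) := by
    intro x hx
    refine inf_eq_left.mpr (le_principal_iff.mpr ?_)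
    refine mem_of_superset (Ioo_mem_nhdsGT_of_mem
      (⟨le_refl (0:ℝ), hτpos x hx⟩ : (0:ℝ) ∈ Ico 0 (τ x))) ?_
    intro t ht
    exact ⟨(hmem x t hx ht).2, (hmem x t hx ht).1⟩
  -- the function g
  set g : ℝ → ℝ → ℝ := fun x t => nrm E d (x * t) t / t with hgdef
  -- concavity in convenient form
  have hcc : ∀ u1 u2 v1 v2 a b : ℝ, u1 ∈ I → u2 ∈ I → v1 ∈ I → v2 ∈ I →
      0 ≤ a → 0 ≤ b → a + b = 1 →
      a * nrm E d u1 u2 + b * nrm E d v1 v2 ≤ nrm E d (a*u1+b*v1) (a*u2+b*v2) := by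
    intro u1 u2 v1 v2 a b hu1 hu2 hv1 hv2 ha hb hab
    have := hconc.2 (Set.mk_mem_prod hu1 hu2) (Set.mk_mem_prod hv1 hv2) ha hb hab
    simpa [Prod.smul_mk, Prod.mk_add_mk, smul_eq_mul] using this
  -- key monotonicity step
  have hstep : ∀ x s t : ℝ, 0 < x → 0 < s → s < t → t < τ x →
      (s/t) * nrm E d (x*t) t ≤ nrm E d (x*s) s := by
    intro x s t hx hs hst htτ
    have ht0 : 0 < t := hs.trans hst
    have hlim := hlim0 x hx
    rw [hfilter x hx] at hlim
    have hid : Tendsto (fun u : ℝ => u) (𝓝[>] (0:ℝ)) (𝓝 0) :=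
      tendsto_id.mono_left nhdsWithin_le_nhds
    have hφlim : Tendsto (fun u : ℝ =>
        ((s-u)/(t-u)) * nrm E d (x*t) t + ((t-s)/(t-u)) * nrm E d (x*u) u)
        (𝓝[>] (0:ℝ)) (𝓝 ((s/t) * nrm E d (x*t) t + ((t-s)/t) * 0)) := by
      refine Tendsto.add ?_ ?_
      · have : Tendsto (fun u : ℝ => (s-u)/(t-u)) (𝓝[>] (0:ℝ)) (𝓝 ((s-0)/(t-0))) :=
          (tendsto_const_nhds.sub hid).div (tendsto_const_nhds.sub hid) (by norm_num; linarith)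
        have := this.mul_const (nrm E d (x*t) t)
        norm_num at this ⊢
        exact this
      · have : Tendsto (fun u : ℝ => (t-s)/(t-u)) (𝓝[>] (0:ℝ)) (𝓝 ((t-s)/(t-0))) :=
          tendsto_const_nhds.div (tendsto_const_nhds.sub hid) (by norm_num; linarith)
        have h2 := this.mul hlim
        norm_num at h2 ⊢
        exact h2
    have hev : ∀ᶠ u in 𝓝[>] (0:ℝ),
        ((s-u)/(t-u)) * nrm E d (x*t) t + ((t-s)/(t-u)) * nrm E d (x*u) u
          ≤ nrm E d (x*s) s := by
      filter_upwards [Ioo_mem_nhdsGT_of_mem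
        (⟨le_refl (0:ℝ), lt_min hs (hτpos x hx)⟩ : (0:ℝ) ∈ Ico 0 (min s (τ x)))]
        with u hu
      obtain ⟨hu0, hum⟩ := hu
      have hus : u < s := lt_of_lt_of_le hum (min_le_left _ _)
      have huτ : u < τ x := lt_of_lt_of_le hum (min_le_right _ _)
      have htu : (0:ℝ) < t - u := by linarith
      obtain ⟨huI, hxuI⟩ := hmem x u hx ⟨hu0, huτ⟩
      obtain ⟨htI, hxtI⟩ := hmem x t hx ⟨ht0, htτ⟩
      have key := hcc (x*t) t (x*u) u ((s-u)/(t-u)) ((t-s)/(t-u)) hxtI htI hxuI huI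
        (div_nonneg (by linarith) htu.le)
        (div_nonneg (by linarith) htu.le)
        (by field_simp; ring)
      have e1 : (s-u)/(t-u)*(x*t) + (t-s)/(t-u)*(x*u) = x*s := by
        field_simp; ring
      have e2 : (s-u)/(t-u)*t + (t-s)/(t-u)*u = s := by
        field_simp; ring
      rw [e1, e2] at key
      exact key
    have := le_of_tendsto hφlim hev
    linarith [this]
  -- g x is antitone in t on Ioo 0 (τ x)
  have hanti : ∀ x : ℝ, 0 < x → AntitoneOn (g x) (Ioo 0 (τ x)) := by
    intro x hx s hs t ht hst
    rcases hst.lt_or_eq with h' | h'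
    · have hkey := hstep x s t hx hs.1 h' ht.2
      have hs0 := hs.1
      have ht0 := ht.1
      simp only [hgdef]
      have h2 := mul_le_mul_of_nonneg_right hkey ht0.le
      have h3 : s / t * nrm E d (x*t) t * t = nrm E d (x*t) t * s := by
        field_simp
      rw [h3] at h2
      rw [div_le_div_iff₀ ht0 hs0]
      nlinarith [h2]
    · subst h'; exact le_refl _
  -- value sign facts for g
  have hgle0 : ∀ x : ℝ, 0 < x → x ≤ 1 → ∀ t ∈ Ioo 0 (τ x), g x t ≤ 0 := by
    intro x hx hx1 t ht
    obtain ⟨htI, hxtI⟩ := hmem x t hx ht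
    have hF : nrm E d (x*t) t ≤ 0 := by
      rcases hx1.lt_or_eq with h' | h'
      · exact (hFneg (x*t) hxtI t htI (by nlinarith [ht.1])).le
      · rw [h', one_mul]; rw [hFzero t htI]
    exact div_nonpos_iff.mpr (Or.inr ⟨hF, ht.1.le⟩)
  have hgpos : ∀ x : ℝ, 1 < x → ∀ t ∈ Ioo 0 (τ x), 0 < g x t := by
    intro x hx t ht
    obtain ⟨htI, hxtI⟩ := hmem x t (by linarith) ht
    exact div_pos (hFpos (x*t) hxtI t htI (by nlinarith [ht.1])) ht.1
  -- boundedness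
  have hbdd : ∀ x : ℝ, 0 < x → BddAbove (g x '' Ioo 0 (τ x / 2)) := by
    intro x hx
    rcases le_or_gt x 1 with hx1 | hx1
    · refine ⟨0, ?_⟩
      rintro y ⟨t, ht, rfl⟩
      exact hgle0 x hx hx1 t ⟨ht.1, by linarith [ht.2, hτpos x hx]⟩
    · -- x > 1 : use concavity with x₀ = 1/x
      set x0 : ℝ := 1/x with hx0def
      have hx00 : 0 < x0 := by positivity
      have hx01 : x0 < 1 := by rw [hx0def]; rw [div_lt_one (by linarith)]; linarith
      have hττ : τ x ≤ τ x0 := by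
        refine le_min (min_le_left _ _) ?_
        have he : c / x0 = c * x := by rw [hx0def]; field_simp
        rw [he]
        calc min c (c/x) ≤ c := min_le_left _ _
          _ ≤ c * x := le_mul_of_one_le_right hc0.le (by linarith)
      set T : ℝ := τ x / 2 with hTdef
      have hT0 : 0 < T := by have := hτpos x hx; positivity
      have hTτ0 : T ∈ Ioo 0 (τ x0) := ⟨hT0, by
        have := hτpos x hx; rw [hTdef]; linarith [hττ]⟩
      set lam : ℝ := (1 - x0)/(x - x0) with hlam
      set mu : ℝ := (x - 1)/(x - x0) with hmu
      have hxx0 : (0:ℝ) < x - x0 := by linarith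
      have hlam0 : 0 < lam := div_pos (by linarith) hxx0
      have hmu0 : 0 < mu := div_pos (by linarith) hxx0
      have hlm : lam + mu = 1 := by
        rw [hlam, hmu, ← add_div, show 1-x0+(x-1) = x-x0 by ring, div_self hxx0.ne']
      refine ⟨(mu/lam) * (-(g x0 T)), ?_⟩
      rintro y ⟨t, ht, rfl⟩
      obtain ⟨ht0, htT⟩ := ht
      have htτ : t < τ x := by linarith [hτpos x hx]
      obtain ⟨htI, hxtI⟩ := hmem x t hx ⟨ht0, htτ⟩
      have hx0tI : x0 * t ∈ I := (hmem x0 t hx00 ⟨ht0, by linarith [hττ]⟩).2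
      have key := hcc (x*t) t (x0*t) t lam mu hxtI htI hx0tI htI hlam0.le hmu0.le hlm
      have hsum : lam*x + mu*x0 = 1 := by
        rw [hlam, hmu]
        rw [div_mul_eq_mul_div, div_mul_eq_mul_div, ← add_div,
          div_eq_one_iff_eq hxx0.ne']
        ring
      have e1 : lam*(x*t) + mu*(x0*t) = t := by
        calc lam*(x*t) + mu*(x0*t) = (lam*x + mu*x0)*t := by ring
          _ = t := by rw [hsum, one_mul]
      have e2 : lam*t + mu*t = t := by rw [← add_mul, hlm, one_mul]
      rw [e1, e2, hFzero t htI] at key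
      -- key : lam * F(xt,t) + mu * F(x0t,t) ≤ 0
      have hmono0 : g x0 T ≤ g x0 t :=
        hanti x0 hx00 ⟨ht0, by linarith [hττ]⟩ hTτ0 (le_of_lt htT)
      have hBt : g x0 T ≤ nrm E d (x0*t) t / t := hmono0
      have key2 : lam * (nrm E d (x*t) t / t) + mu * (nrm E d (x0*t) t / t) ≤ 0 := by
        have hq : (lam * nrm E d (x*t) t + mu * nrm E d (x0*t) t)/t ≤ 0 :=
          div_nonpos_iff.mpr (Or.inr ⟨key, ht0.le⟩)
        calc lam * (nrm E d (x*t) t / t) + mu * (nrm E d (x0*t) t / t)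
            = (lam * nrm E d (x*t) t + mu * nrm E d (x0*t) t)/t := by ring
          _ ≤ 0 := hq
      have h3 : mu * (g x0 T) ≤ mu * (nrm E d (x0*t) t / t) :=
        mul_le_mul_of_nonneg_left hBt hmu0.le
      show nrm E d (x*t) t / t ≤ mu / lam * -(g x0 T)
      rw [div_mul_eq_mul_div, le_div_iff₀ hlam0]
      nlinarith [key2, h3]
  -- definition of h
  set h : ℝ → ℝ := fun x => sSup (g x '' Ioo 0 (τ x / 2)) with hhdef
  have hIoone : ∀ x : ℝ, 0 < x → (Ioo (0:ℝ) (τ x / 2)).Nonempty := by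
    intro x hx
    exact nonempty_Ioo.mpr (by linarith [hτpos x hx])
  have htend : ∀ x : ℝ, 0 < x → Tendsto (g x) (𝓝[>] (0:ℝ)) (𝓝 (h x)) := by
    intro x hx
    exact AntitoneOn.tendsto_nhdsWithin_Ioo_right (hIoone x hx)
      ((hanti x hx).mono (Ioo_subset_Ioo_right (by linarith [hτpos x hx])))
      (hbdd x hx)
  have hhle : ∀ x : ℝ, 0 < x → ∀ t ∈ Ioo 0 (τ x / 2), g x t ≤ h x := by
    intro x hx t ht
    exact le_csSup (hbdd x hx) (mem_image_of_mem _ ht)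
  -- h 1 = 0
  have hh1 : h 1 = 0 := by
    have hones : ∀ t ∈ Ioo (0:ℝ) (τ 1 / 2), g 1 t = 0 := by
      intro t ht
      have htτ : t ∈ Ioo 0 (τ 1) := ⟨ht.1, by linarith [ht.2, hτpos 1 one_pos]⟩
      have := hmem 1 t one_pos htτ
      simp only [hgdef]
      rw [one_mul, hFzero t this.1, zero_div]
    obtain ⟨t0, ht0⟩ := hIoone 1 one_pos
    refine le_antisymm ?_ ?_
    · refine csSup_le ((hIoone 1 one_pos).image _) ?_
      rintro y ⟨t, ht, rfl⟩
      rw [hones t ht]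
    · rw [← hones t0 ht0]
      exact hhle 1 one_pos t0 ht0
  -- h nonpositive on (0,1]
  have hhle0 : ∀ x : ℝ, 0 < x → x ≤ 1 → h x ≤ 0 := by
    intro x hx hx1
    refine csSup_le ((hIoone x hx).image _) ?_
    rintro y ⟨t, ht, rfl⟩
    exact hgle0 x hx hx1 t ⟨ht.1, by linarith [ht.2, hτpos x hx]⟩
  -- h positive on (1,∞)
  have hhpos : ∀ x : ℝ, 1 < x → 0 < h x := by
    intro x hx
    obtain ⟨t0, ht0⟩ := hIoone x (by linarith)
    have := hgpos x hx t0 ⟨ht0.1, by linarith [ht0.2, hτpos x (by linarith : (0:ℝ) < x)]⟩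
    exact lt_of_lt_of_le this (hhle x (by linarith) t0 ht0)
  -- concavity of h
  have hconcave : ConcaveOn ℝ (Ioi (0:ℝ)) h := by
    refine ⟨convex_Ioi 0, ?_⟩
    intro p hp q hq a b ha hb hab
    simp only [smul_eq_mul]
    rw [mem_Ioi] at hp hq
    have hz : 0 < a * p + b * q := by
      rcases eq_or_lt_of_le ha with h' | h'
      · have hb1 : b = 1 := by linarith
        rw [← h', hb1]; simpa using hq
      · nlinarith [mul_pos h' hp, mul_nonneg hb hq.le]
    have hev : ∀ᶠ t in 𝓝[>] (0:ℝ), a * g p t + b * g q t ≤ g (a*p+b*q) t := by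
      have hm0 : (0:ℝ) < min (τ p) (min (τ q) (τ (a*p+b*q))) :=
        lt_min (hτpos p hp) (lt_min (hτpos q hq) (hτpos _ hz))
      filter_upwards [Ioo_mem_nhdsGT_of_mem
        (⟨le_refl (0:ℝ), hm0⟩ : (0:ℝ) ∈ Ico 0 (min (τ p) (min (τ q) (τ (a*p+b*q)))))]
        with t ht
      obtain ⟨ht0, htm⟩ := ht
      have htp : t < τ p := lt_of_lt_of_le htm (min_le_left _ _)
      have htq : t < τ q := lt_of_lt_of_le htm ((min_le_right _ _).trans (min_le_left _ _))
      have htz : t < τ (a*p+b*q) := lt_of_lt_of_le htm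
        ((min_le_right _ _).trans (min_le_right _ _))
      obtain ⟨htI, hptI⟩ := hmem p t hp ⟨ht0, htp⟩
      have hqtI : q * t ∈ I := (hmem q t hq ⟨ht0, htq⟩).2
      have key := hcc (p*t) t (q*t) t a b hptI htI hqtI htI ha hb hab
      have e1 : a*(p*t) + b*(q*t) = (a*p+b*q)*t := by ring
      have e2 : a*t + b*t = t := by rw [← add_mul, hab, one_mul]
      rw [e1, e2] at key
      simp only [hgdef]
      calc a * (nrm E d (p*t) t / t) + b * (nrm E d (q*t) t / t)
          = (a * nrm E d (p*t) t + b * nrm E d (q*t) t)/t := by ring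
        _ ≤ nrm E d ((a*p+b*q)*t) t / t := (div_le_div_iff_of_pos_right ht0).mpr key
    have hT1 : Tendsto (fun t => a * g p t + b * g q t) (𝓝[>] (0:ℝ))
        (𝓝 (a * h p + b * h q)) :=
      ((htend p hp).const_mul a).add ((htend q hq).const_mul b)
    exact le_of_tendsto_of_tendsto hT1 (htend _ hz) hev
  -- h strictly negative on (0,1)
  have hhneg : ∀ x : ℝ, 0 < x → x < 1 → h x < 0 := by
    intro x hx hx1
    rcases (hhle0 x hx hx1.le).lt_or_eq with h' | h'
    · exact h'
    · exfalso
      -- 1 = α x + β 2, α = 1/(2-x), β = (1-x)/(2-x)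
      have h2x : (0:ℝ) < 2 - x := by linarith
      have hkey := hconcave.2 (mem_Ioi.mpr hx) (mem_Ioi.mpr (by norm_num : (0:ℝ) < 2))
        (show (0:ℝ) ≤ 1/(2-x) by positivity)
        (show (0:ℝ) ≤ (1-x)/(2-x) from div_nonneg (by linarith) h2x.le)
        (show 1/(2-x) + (1-x)/(2-x) = 1 by
          rw [← add_div, show (1:ℝ)+(1-x) = 2-x by ring, div_self h2x.ne'])
      simp only [smul_eq_mul] at hkey
      have e : 1/(2-x) * x + (1-x)/(2-x) * 2 = 1 := by field_simp; ring
      rw [e, hh1, h'] at hkey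
      rw [mul_zero, zero_add] at hkey
      have h2pos := hhpos 2 (by norm_num)
      have hβ : (0:ℝ) < (1-x)/(2-x) := div_pos (by linarith) h2x
      nlinarith [mul_pos hβ h2pos]
  -- monotone
  have hmono : MonotoneOn h (Ioi (0:ℝ)) := by
    intro a ha b hb hab
    rw [mem_Ioi] at ha hb
    rcases hab.lt_or_eq with hab' | hab'
    swap
    · subst hab'; exact le_refl _
    by_contra hcon
    push_neg at hcon
    have hD0 : (0:ℝ) < h a - h b := by linarith
    set y : ℝ := max (b+1) ((b * h a - a * h b)/(h a - h b) + 1) with hy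
    have hy1 : 1 < y := lt_of_lt_of_le (by linarith) (le_max_left _ _)
    have hyb : b < y := lt_of_lt_of_le (by linarith) (le_max_left _ _)
    have hya : a < y := hab'.trans hyb
    have hya0 : (0:ℝ) < y - a := by linarith
    have hykey : (b * h a - a * h b)/(h a - h b) < y :=
      lt_of_lt_of_le (lt_add_one _) (le_max_right _ _)
    have hyD : b * h a - a * h b < y * (h a - h b) := (div_lt_iff₀ hD0).mp hykey
    have hkey := hconcave.2 (mem_Ioi.mpr ha) (mem_Ioi.mpr (by linarith : (0:ℝ) < y))
      (show (0:ℝ) ≤ (y-b)/(y-a) from div_nonneg (by linarith) hya0.le)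
      (show (0:ℝ) ≤ (b-a)/(y-a) from div_nonneg (by linarith) hya0.le)
      (show (y-b)/(y-a) + (b-a)/(y-a) = 1 by
        rw [← add_div, show y-b+(b-a) = y-a by ring, div_self hya0.ne'])
    simp only [smul_eq_mul] at hkey
    have e : (y-b)/(y-a) * a + (b-a)/(y-a) * y = b := by field_simp; ring
    rw [e] at hkey
    -- multiply by (y - a)
    have hkey2 : (y-b) * h a + (b-a) * h y ≤ (y-a) * h b := by
      have hm := mul_le_mul_of_nonneg_right hkey hya0.le
      have e2 : ((y-b)/(y-a) * h a + (b-a)/(y-a) * h y) * (y-a)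
          = (y-b) * h a + (b-a) * h y := by field_simp <;> ring
      rw [e2] at hm
      nlinarith [hm]
    have hhy := hhpos y hy1
    have hfin : (b - a) * h y < 0 := by nlinarith [hkey2, hyD]
    exact absurd hfin (not_lt.mpr (mul_pos (sub_pos.mpr hab') hhy).le)
  -- strictly monotone on (0,1)
  have hsm : StrictMonoOn h (Ioo (0:ℝ) 1) := by
    intro a ha b hb hab
    obtain ⟨ha0, ha1⟩ := ha
    obtain ⟨hb0, hb1⟩ := hb
    rcases lt_or_ge (h a) (h b) with h' | h'
    · exact h'
    have heq : h a = h b :=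
      le_antisymm (hmono (mem_Ioi.mpr ha0) (mem_Ioi.mpr hb0) hab.le) h'
    exfalso
    have h2a : (0:ℝ) < 2 - a := by linarith
    have hkey := hconcave.2 (mem_Ioi.mpr ha0) (mem_Ioi.mpr (by norm_num : (0:ℝ) < 2))
      (show (0:ℝ) ≤ (2-b)/(2-a) from div_nonneg (by linarith) h2a.le)
      (show (0:ℝ) ≤ (b-a)/(2-a) from div_nonneg (by linarith) h2a.le)
      (show (2-b)/(2-a) + (b-a)/(2-a) = 1 by
        rw [← add_div, show (2:ℝ)-b+(b-a) = 2-a by ring, div_self h2a.ne'])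
    simp only [smul_eq_mul] at hkey
    have e : (2-b)/(2-a) * a + (b-a)/(2-a) * 2 = b := by field_simp; ring
    rw [e, ← heq] at hkey
    have h2pos := hhpos 2 (by norm_num)
    have hane := hhneg a ha0 ha1
    have hβ : (0:ℝ) < (b-a)/(2-a) := div_pos (by linarith) h2a
    have hα : (2-b)/(2-a) + (b-a)/(2-a) = 1 := by
      rw [← add_div, div_eq_one_iff_eq h2a.ne']; ring
    nlinarith [hkey, mul_pos hβ h2pos, hα, hane, mul_pos hβ (neg_pos.mpr hane)]
  -- assemble
  refine ⟨h, ?_, ?_, hconcave, hmono, hsm⟩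
  · intro x hx
    rw [hfilter x hx]
    exact htend x hx
  · intro x hx
    rcases lt_trichotomy x 1 with h1 | h1 | h1
    · rw [Real.sign_of_neg (hhneg x hx h1), Real.sign_of_neg (by linarith : x - 1 < 0)]
    · subst h1
      rw [hh1, sub_self, Real.sign_zero]
    · rw [Real.sign_of_pos (hhpos x h1), Real.sign_of_pos (by linarith : (0:ℝ) < x - 1)]
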